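/- arXiv:1505.04125 — 4 statements merged into one kernel-verified Lean document; each statement's English description precedes it below -/
import Mathlib

section
/- For any graph G, any k ≥ 2 and any l ≥ 0, the composite ∂ ∘ ∂ : MC_{k,l}(G) → MC_{k-1,l}(G) → MC_{k-2,l}(G) of the magnitude differentials is the zero map; hence (MC_{*,l}(G), ∂) is a chain complex. -/
noncomputable section

namespace MagnitudeHomology

open Classical

variable {V : Type*} {W : Type*}

/-- The length `ℓ(x₀,…,x_k)` of a tuple of vertices: the sum of consecutive
(extended) shortest-path distances. -/
def tupleLen (G : SimpleGraph V) {k : ℕ} (x : Fin (k + 1) → V) : ℕ∞ :=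
  ∑ i : Fin k, G.edist (x i.castSucc) (x i.succ)

/-- The condition defining the generators of `MC_{k,l}(G)`: consecutive entries
distinct and total length `l`. -/
def IsMagTuple (G : SimpleGraph V) (l : ℕ) {k : ℕ} (x : Fin (k + 1) → V) : Prop :=
  (∀ i : Fin k, x i.castSucc ≠ x i.succ) ∧ tupleLen G x = (l : ℕ∞)

/-- The generating tuples of the magnitude chain group `MC_{k,l}(G)`. -/
def MagTuple (G : SimpleGraph V) (k l : ℕ) : Type _ :=
  {x : Fin (k + 1) → V // IsMagTuple G l x}

/-- The magnitude chain group `MC_{k,l}(G)`: the free abelian group on tuples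
`(x₀,…,x_k)` with consecutive entries distinct and length `l`. -/
def MC (G : SimpleGraph V) (k l : ℕ) : Type _ :=
  FreeAbelianGroup (MagTuple G k l)

instance (G : SimpleGraph V) (k l : ℕ) : AddCommGroup (MC G k l) :=
  inferInstanceAs (AddCommGroup (FreeAbelianGroup _))

/-- The generator of `MC_{k,l}(G)` corresponding to a tuple, or `0` if the tuple
does not satisfy the defining conditions. -/
def mcGen (G : SimpleGraph V) {k : ℕ} (l : ℕ) (x : Fin (k + 1) → V) : MC G k l :=
  if h : IsMagTuple G l x then FreeAbelianGroup.of (⟨x, h⟩ : MagTuple G k l) else 0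

/-- The magnitude differential `∂ = ∑_{i=1}^{k} (-1)^i ∂_i : MC_{k+1,l}(G) → MC_{k,l}(G)`,
where `∂_i` omits the `i`-th entry if this preserves the length, and is `0` otherwise. -/
def magDiff (G : SimpleGraph V) (k l : ℕ) : MC G (k + 1) l →+ MC G k l :=
  FreeAbelianGroup.lift fun (x : MagTuple G (k + 1) l) =>
    ∑ i : Fin k, ((-1 : ℤ) ^ ((i : ℕ) + 1)) •
      mcGen G l (x.1 ∘ Fin.succAbove i.succ.castSucc)



lemma val_succAbove {n : ℕ} (p : Fin (n + 1)) (m : Fin n) :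
    ((p.succAbove m : Fin (n + 1)) : ℕ) = if (m : ℕ) < (p : ℕ) then (m : ℕ) else (m : ℕ) + 1 := by
  rcases lt_or_ge m.castSucc p with h | h
  · rw [Fin.succAbove_of_castSucc_lt _ _ h, if_pos (by simpa [Fin.lt_def] using h)]
    rfl
  · rw [Fin.succAbove_of_le_castSucc _ _ h, if_neg (by simpa [Fin.le_def, not_lt] using h)]
    rfl

lemma succAbove_idx₁ {n : ℕ} (a j : Fin n) (hja : (j : ℕ) ≠ (a : ℕ)) :
    (a.succ.castSucc : Fin (n + 2)).succAbove j.castSucc = (a.castSucc.succAbove j).castSucc := by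
  apply Fin.ext
  simp only [val_succAbove, Fin.coe_castSucc, Fin.val_succ]
  split_ifs <;> omega

lemma succAbove_idx₂ {n : ℕ} (a j : Fin n) :
    (a.succ.castSucc : Fin (n + 2)).succAbove j.succ = (a.castSucc.succAbove j).succ := by
  apply Fin.ext
  simp only [val_succAbove, Fin.coe_castSucc, Fin.val_succ]
  split_ifs <;> omega

lemma succAbove_self₁ {n : ℕ} (a : Fin n) :
    (a.succ.castSucc : Fin (n + 2)).succAbove a.castSucc = a.castSucc.castSucc := by
  apply Fin.ext
  simp [val_succAbove]

lemma succAbove_self₂ {n : ℕ} (a : Fin n) :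
    (a.succ.castSucc : Fin (n + 2)).succAbove a.succ = a.succ.succ := by
  apply Fin.ext
  simp [val_succAbove]

lemma succAbove_cast_self {n : ℕ} (a : Fin n) :
    (a.castSucc : Fin (n + 1)).succAbove a = a.succ := by
  apply Fin.ext
  simp [val_succAbove]

lemma tupleLen_face_add (G : SimpleGraph V) {n : ℕ} (x : Fin (n + 2) → V) (a : Fin n) :
    tupleLen G x + G.edist (x a.castSucc.castSucc) (x a.succ.succ)
      = tupleLen G (x ∘ Fin.succAbove a.succ.castSucc)
        + G.edist (x a.castSucc.castSucc) (x a.succ.castSucc)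
        + G.edist (x a.succ.castSucc) (x a.succ.succ) := by
  classical
  have hT : tupleLen G x
      = G.edist (x a.castSucc.castSucc) (x a.succ.castSucc)
        + ∑ j : Fin n, G.edist (x (a.castSucc.succAbove j).castSucc)
            (x (a.castSucc.succAbove j).succ) := by
    have := Fin.sum_univ_succAbove
      (fun i : Fin (n + 1) => G.edist (x i.castSucc) (x i.succ)) a.castSucc
    rw [tupleLen, this, Fin.succ_castSucc]
  have hsplit1 : ∑ j : Fin n, G.edist (x (a.castSucc.succAbove j).castSucc)
        (x (a.castSucc.succAbove j).succ)
      = (∑ j ∈ Finset.univ \ {a}, G.edist (x (a.castSucc.succAbove j).castSucc)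
          (x (a.castSucc.succAbove j).succ))
        + G.edist (x a.succ.castSucc) (x a.succ.succ) := by
    rw [Finset.sum_eq_sum_sdiff_singleton_add (Finset.mem_univ a), succAbove_cast_self]
  have hsplit2 : tupleLen G (x ∘ Fin.succAbove a.succ.castSucc)
      = (∑ j ∈ Finset.univ \ {a}, G.edist (x (a.castSucc.succAbove j).castSucc)
          (x (a.castSucc.succAbove j).succ))
        + G.edist (x a.castSucc.castSucc) (x a.succ.succ) := by
    rw [tupleLen, Finset.sum_eq_sum_sdiff_singleton_add (Finset.mem_univ a)]
    congr 1
    · apply Finset.sum_congr rfl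
      intro j hj
      have hja : (j : ℕ) ≠ (a : ℕ) := by
        have := (Finset.mem_sdiff.mp hj).2
        simpa [Fin.ext_iff] using this
      simp only [Function.comp_apply, succAbove_idx₁ a j hja, succAbove_idx₂ a j]
    · simp only [Function.comp_apply, succAbove_self₁, succAbove_self₂]
  rw [hT, hsplit1, hsplit2]
  abel

lemma term_le_tupleLen (G : SimpleGraph V) {n : ℕ} (x : Fin (n + 1) → V) (i : Fin n) :
    G.edist (x i.castSucc) (x i.succ) ≤ tupleLen G x := by
  rw [tupleLen]
  exact Finset.single_le_sum (f := fun j : Fin n => G.edist (x j.castSucc) (x j.succ))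
    (fun _ _ => zero_le) (Finset.mem_univ i)

lemma tupleLen_face_le (G : SimpleGraph V) {n : ℕ} (x : Fin (n + 2) → V) (a : Fin n)
    (hfin : tupleLen G x ≠ ⊤) :
    tupleLen G (x ∘ Fin.succAbove a.succ.castSucc) ≤ tupleLen G x := by
  have hA := tupleLen_face_add G x a
  have htri : G.edist (x a.castSucc.castSucc) (x a.succ.succ)
      ≤ G.edist (x a.castSucc.castSucc) (x a.succ.castSucc)
        + G.edist (x a.succ.castSucc) (x a.succ.succ) :=
    SimpleGraph.edist_triangle
  have hd : G.edist (x a.castSucc.castSucc) (x a.succ.castSucc) ≠ ⊤ := by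
    have h := term_le_tupleLen G x a.castSucc
    rw [Fin.succ_castSucc] at h
    exact fun ht => hfin (top_le_iff.mp (ht ▸ h))
  have he : G.edist (x a.succ.castSucc) (x a.succ.succ) ≠ ⊤ := by
    have h := term_le_tupleLen G x a.succ
    exact fun ht => hfin (top_le_iff.mp (ht ▸ h))
  have key : tupleLen G (x ∘ Fin.succAbove a.succ.castSucc)
        + (G.edist (x a.castSucc.castSucc) (x a.succ.castSucc)
          + G.edist (x a.succ.castSucc) (x a.succ.succ))
      ≤ tupleLen G x
        + (G.edist (x a.castSucc.castSucc) (x a.succ.castSucc)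
          + G.edist (x a.succ.castSucc) (x a.succ.succ)) := by
    rw [← add_assoc, ← hA]
    exact add_le_add le_rfl htri
  exact (WithTop.add_le_add_iff_right (WithTop.add_ne_top.mpr ⟨hd, he⟩)).mp key



lemma tupleLen_face_lt (G : SimpleGraph V) {n l : ℕ} (x : Fin (n + 2) → V)
    (hx : IsMagTuple G l x) (a : Fin n)
    (hny : ¬ IsMagTuple G l (x ∘ Fin.succAbove a.succ.castSucc)) :
    tupleLen G (x ∘ Fin.succAbove a.succ.castSucc) < (l : ℕ∞) := by
  have hfin : tupleLen G x ≠ ⊤ := by rw [hx.2]; exact ENat.coe_ne_top l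
  have hle : tupleLen G (x ∘ Fin.succAbove a.succ.castSucc) ≤ (l : ℕ∞) :=
    hx.2 ▸ tupleLen_face_le G x a hfin
  rcases hle.lt_or_eq with h | h
  · exact h
  · exfalso
    apply hny
    refine ⟨?_, h⟩
    intro j
    by_cases hja : (j : ℕ) = (a : ℕ)
    · have hj : j = a := Fin.ext hja
      subst hj
      simp only [Function.comp_apply, succAbove_self₁, succAbove_self₂]
      intro hceq
      have hA := tupleLen_face_add G x j
      rw [hx.2, h, SimpleGraph.edist_eq_zero_iff.mpr hceq, add_zero, add_assoc] at hA
      have h0 : (0 : ℕ∞) = G.edist (x j.castSucc.castSucc) (x j.succ.castSucc)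
          + G.edist (x j.succ.castSucc) (x j.succ.succ) := by
        refine WithTop.add_left_cancel (ENat.coe_ne_top l) ?_
        refine (add_zero _).trans ?_
        exact hA
      have hd : G.edist (x j.castSucc.castSucc) (x j.succ.castSucc) ≠ 0 := by
        intro hd0
        have := hx.1 j.castSucc
        rw [Fin.succ_castSucc] at this
        exact this (SimpleGraph.edist_eq_zero_iff.mp hd0)
      exact hd (add_eq_zero.mp h0.symm).1
    · simp only [Function.comp_apply, succAbove_idx₁ a j hja, succAbove_idx₂ a j]
      exact hx.1 (a.castSucc.succAbove j)

lemma mcGen_face_eq_zero (G : SimpleGraph V) {k l : ℕ} (y : Fin (k + 2) → V)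
    (hy : tupleLen G y < (l : ℕ∞)) (j : Fin k) :
    mcGen G l (y ∘ Fin.succAbove j.succ.castSucc) = 0 := by
  rw [mcGen]; refine dif_neg ?_
  rintro ⟨-, hlen⟩
  have hfin : tupleLen G y ≠ ⊤ := ne_top_of_lt hy
  exact absurd hlen ((tupleLen_face_le G y j hfin).trans_lt hy).ne

lemma magDiff_mcGen (G : SimpleGraph V) {k l : ℕ} (y : Fin (k + 2) → V)
    (hy : ¬ IsMagTuple G l y → tupleLen G y < (l : ℕ∞)) :
    magDiff G k l (mcGen G l y)
      = ∑ j : Fin k, ((-1 : ℤ) ^ ((j : ℕ) + 1)) • mcGen G l (y ∘ Fin.succAbove j.succ.castSucc) := by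
  by_cases h : IsMagTuple G l y
  · rw [show mcGen G l y = FreeAbelianGroup.of (⟨y, h⟩ : MagTuple G (k + 1) l) from dif_pos h, magDiff]
    exact FreeAbelianGroup.lift_apply_of _ _
  · rw [show mcGen G l y = 0 from dif_neg h, map_zero]
    exact (Finset.sum_eq_zero fun j _ => by
      rw [mcGen_face_eq_zero G y (hy h) j, smul_zero]).symm

lemma pair_cancel (G : SimpleGraph V) {k l : ℕ} (x : Fin (k + 3) → V)
    (i i' : Fin (k + 1)) (j j' : Fin k)
    (h : (j : ℕ) < (i : ℕ)) (hi' : (i' : ℕ) = (j : ℕ)) (hj' : (j' : ℕ) = (i : ℕ) - 1) :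
    ((-1 : ℤ) ^ ((i : ℕ) + 1) * (-1 : ℤ) ^ ((j : ℕ) + 1)) •
        mcGen G l ((x ∘ Fin.succAbove i.succ.castSucc) ∘ Fin.succAbove j.succ.castSucc)
      + ((-1 : ℤ) ^ ((i' : ℕ) + 1) * (-1 : ℤ) ^ ((j' : ℕ) + 1)) •
        mcGen G l ((x ∘ Fin.succAbove i'.succ.castSucc) ∘ Fin.succAbove j'.succ.castSucc) = 0 := by
  have hface : (x ∘ Fin.succAbove i.succ.castSucc) ∘ Fin.succAbove j.succ.castSucc
      = (x ∘ Fin.succAbove i'.succ.castSucc) ∘ Fin.succAbove j'.succ.castSucc := by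
    funext m
    simp only [Function.comp_apply]
    congr 1
    apply Fin.ext
    have hm := m.isLt
    have hjk := j.isLt
    have hik := i.isLt
    simp only [val_succAbove, Fin.coe_castSucc, Fin.val_succ]
    split_ifs <;> omega
  rw [hface, ← add_smul]
  have hc : (-1 : ℤ) ^ ((i : ℕ) + 1) * (-1) ^ ((j : ℕ) + 1)
      + (-1 : ℤ) ^ ((i' : ℕ) + 1) * (-1) ^ ((j' : ℕ) + 1) = 0 := by
    rw [hi', hj']
    rw [show (i : ℕ) - 1 + 1 = (i : ℕ) by omega, pow_succ (-1 : ℤ) (i : ℕ)]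
    ring
  rw [hc, zero_smul]

/-- For any (finite simple) graph `G`, the composite of two
consecutive magnitude differentials `∂ ∘ ∂ : MC_{k+2,l}(G) → MC_{k+1,l}(G) → MC_{k,l}(G)`
is the zero map (equivalently, for all `k ≥ 2` the composite
`MC_{k,l} → MC_{k-1,l} → MC_{k-2,l}` vanishes); hence `(MC_{*,l}(G), ∂)` is a
chain complex. -/
theorem magDiff_comp_magDiff {V : Type*} [Fintype V] (G : SimpleGraph V) (k l : ℕ) :
    (magDiff G k l).comp (magDiff G (k + 1) l) = 0 := by
  apply FreeAbelianGroup.lift_ext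
  intro x
  show (magDiff G k l) ((magDiff G (k + 1) l) (FreeAbelianGroup.of x)) = 0
  have h1 : magDiff G (k + 1) l (FreeAbelianGroup.of x)
      = ∑ i : Fin (k + 1), ((-1 : ℤ) ^ ((i : ℕ) + 1)) •
          mcGen G l (x.1 ∘ Fin.succAbove i.succ.castSucc) := by
    rw [magDiff]
    exact FreeAbelianGroup.lift_apply_of _ _
  rw [h1, map_sum]
  have h2 : ∀ i : Fin (k + 1),
      magDiff G k l (((-1 : ℤ) ^ ((i : ℕ) + 1)) • mcGen G l (x.1 ∘ Fin.succAbove i.succ.castSucc))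
        = ∑ j : Fin k, ((-1 : ℤ) ^ ((i : ℕ) + 1) * (-1 : ℤ) ^ ((j : ℕ) + 1)) •
            mcGen G l ((x.1 ∘ Fin.succAbove i.succ.castSucc) ∘ Fin.succAbove j.succ.castSucc) := by
    intro i
    rw [map_zsmul, magDiff_mcGen G _ (tupleLen_face_lt G x.1 x.2 i), Finset.smul_sum]
    exact Finset.sum_congr rfl fun j _ => smul_smul _ _ _
  rw [Finset.sum_congr rfl fun i _ => h2 i, ← Finset.sum_product', Finset.univ_product_univ]
  refine Finset.sum_ninvolution
    (fun p : Fin (k + 1) × Fin k =>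
      if h : (p.2 : ℕ) < (p.1 : ℕ) then
        (p.2.castSucc, ⟨(p.1 : ℕ) - 1, by have := p.1.isLt; have := p.2.isLt; omega⟩)
      else (p.2.succ, ⟨(p.1 : ℕ), by have := p.2.isLt; omega⟩))
    ?_ ?_ (fun _ => Finset.mem_univ _) ?_
  · rintro ⟨i, j⟩
    dsimp only
    by_cases h : (j : ℕ) < (i : ℕ)
    · rw [dif_pos h]
      exact pair_cancel G x.1 i j.castSucc j _ h (by simp) rfl
    · rw [dif_neg h]
      rw [add_comm]
      refine pair_cancel G x.1 j.succ i ⟨(i : ℕ), by have := j.isLt; omega⟩ j ?_ rfl ?_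
      · simpa using Nat.lt_succ_of_le (not_lt.mp h)
      · simp
  · rintro ⟨i, j⟩ _ heq
    have hv := congrArg (fun q : Fin (k + 1) × Fin k => (q.1 : ℕ)) heq
    dsimp only at hv
    by_cases h : (j : ℕ) < (i : ℕ)
    · rw [dif_pos h] at hv
      simp at hv
      omega
    · rw [dif_neg h] at hv
      simp at hv
      omega
  · rintro ⟨i, j⟩
    dsimp only
    by_cases h : (j : ℕ) < (i : ℕ)
    · rw [dif_pos h, dif_neg (by simp; omega)]
      refine Prod.ext (Fin.ext ?_) (Fin.ext ?_) <;> simp <;> omega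
    · rw [dif_neg h, dif_pos (by simp; omega)]
      refine Prod.ext (Fin.ext ?_) (Fin.ext ?_) <;> simp <;> omega

end MagnitudeHomology
end
end

section
/- Let G be a graph and suppose MH_{k,l}(G) ≠ 0. Then k ≤ l. If moreover G is connected with finite diameter d, then l/d ≤ k; and if additionally d > 1 and l > 0, then the strict inequality l/d < k holds. -/
noncomputable section

namespace MagnitudeHomology

open Classical

variable {V : Type*} {W : Type*}

/-- The subgroup of cycles: everything in degree `0`, the kernel of `∂` in
positive degrees. -/
def magCycles (G : SimpleGraph V) (l : ℕ) : (k : ℕ) → AddSubgroup (MC G k l)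
  | 0 => ⊤
  | (k + 1) => (magDiff G k l).ker

/-- The boundaries, viewed as a subgroup of the cycles. -/
def magBoundaries (G : SimpleGraph V) (k l : ℕ) : AddSubgroup (magCycles G l k) :=
  ((magDiff G k l).range).addSubgroupOf (magCycles G l k)

/-- Magnitude homology `MH_{k,l}(G) = H_k(MC_{*,l}(G))`. -/
def MH (G : SimpleGraph V) (k l : ℕ) : Type _ :=
  magCycles G l k ⧸ magBoundaries G k l

instance (G : SimpleGraph V) (k l : ℕ) : AddCommGroup (MH G k l) :=
  inferInstanceAs (AddCommGroup (_ ⧸ _))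

/-- The homology class of a chain: its class if it is a cycle, `0` otherwise. -/
def mkMH (G : SimpleGraph V) (k l : ℕ) (z : MC G k l) : MH G k l :=
  if h : z ∈ magCycles G l k then QuotientAddGroup.mk ⟨z, h⟩ else 0


section Aux

variable {V : Type*}

lemma succAbove_val {n : ℕ} (p : Fin (n + 1)) (i : Fin n) :
    ((p.succAbove i : Fin (n + 1)) : ℕ) =
      if (i : ℕ) < (p : ℕ) then (i : ℕ) else (i : ℕ) + 1 := by
  rcases lt_or_ge i.castSucc p with h | h
  · rw [Fin.succAbove_of_castSucc_lt _ _ h]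
    have := h
    rw [Fin.lt_def] at this
    simp only [Fin.coe_castSucc] at this ⊢
    rw [if_pos this]
  · rw [Fin.succAbove_of_le_castSucc _ _ h]
    have := h
    rw [Fin.le_def] at this
    simp only [Fin.coe_castSucc] at this
    simp only [Fin.val_succ]
    rw [if_neg (by omega)]

lemma subsingleton_MC_of_isEmpty (G : SimpleGraph V) (k l : ℕ)
    (hemp : IsEmpty (MagTuple G k l)) : Subsingleton (MC G k l) := by
  have hz : ∀ w : MC G k l, w = 0 := by
    intro w
    refine FreeAbelianGroup.induction_on w rfl (fun x => hemp.elim x) (fun x => hemp.elim x)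
      (fun a b ha hb => by rw [ha, hb]; exact add_zero _)
  exact ⟨fun a b => by rw [hz a, hz b]⟩

lemma exists_mid (G : SimpleGraph V) (u v : V) (d : ℕ) (hd : 2 ≤ d)
    (h : G.edist u v = (d : ℕ∞)) :
    ∃ y : V, G.edist u y = 1 ∧ G.edist y v = ((d - 1 : ℕ) : ℕ∞) := by
  obtain ⟨p, hp⟩ := SimpleGraph.exists_walk_of_edist_eq_coe h
  cases p with
  | nil => simp at hp; omega
  | @cons _ y _ hadj q =>
    refine ⟨y, SimpleGraph.edist_eq_one_iff_adj.mpr hadj, ?_⟩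
    have hq : (q.length : ℕ∞) = ((d - 1 : ℕ) : ℕ∞) := by
      simp [SimpleGraph.Walk.length_cons] at hp
      exact_mod_cast by omega
    have hle : G.edist y v ≤ ((d - 1 : ℕ) : ℕ∞) := hq ▸ SimpleGraph.edist_le q
    obtain ⟨n, hn⟩ := (WithTop.ne_top_iff_exists).mp (ne_top_of_le_ne_top (WithTop.coe_ne_top) hle)
    have hn' : (n : ℕ∞) ≤ ((d - 1 : ℕ) : ℕ∞) := le_of_eq_of_le hn hle
    have htri : (d : ℕ∞) ≤ 1 + (n : ℕ∞) := by
      calc (d : ℕ∞) = G.edist u v := h.symm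
        _ ≤ G.edist u y + G.edist y v := SimpleGraph.edist_triangle
        _ = 1 + (n : ℕ∞) := by
            rw [SimpleGraph.edist_eq_one_iff_adj.mpr hadj, ← hn]; rfl
    rw [← hn]
    have h1 : n ≤ d - 1 := by exact_mod_cast hn'
    have h2 : d ≤ 1 + n := by exact_mod_cast htri
    congr 1
    omega

lemma magDiff_of (G : SimpleGraph V) (k l : ℕ) (x : MagTuple G (k + 1) l) :
    magDiff G k l (FreeAbelianGroup.of x) =
      ∑ i : Fin k, ((-1 : ℤ) ^ ((i : ℕ) + 1)) •
        mcGen G l (x.1 ∘ Fin.succAbove i.succ.castSucc) :=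
  FreeAbelianGroup.lift_apply_of _ _

/-- The key homological step: if `l = (m+1) * diam` with `diam ≥ 2`, then the
differential onto degree `m+1` is surjective, so `MH_{m+1,l}` vanishes. -/
lemma MH_subsingleton_of_mul (G : SimpleGraph V) (m l : ℕ)
    (hd : 1 < G.diam) (hleq : l = (m + 1) * G.diam) :
    Subsingleton (MH G (m + 1) l) := by
  have hDne : G.ediam ≠ ⊤ := G.ediam_ne_top_of_diam_ne_zero (by omega)
  have hD : G.ediam = (G.diam : ℕ∞) := (ENat.coe_toNat hDne).symm
  have edist_le_d : ∀ u v : V, G.edist u v ≤ (G.diam : ℕ∞) := fun u v => hD ▸ SimpleGraph.edist_le_ediam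
  -- the first gap of any generator equals `G.diam`
  have gap0 : ∀ x : MagTuple G (m + 1) l,
      G.edist (x.1 ((0 : Fin (m + 1)).castSucc)) (x.1 ((0 : Fin (m + 1)).succ)) = (G.diam : ℕ∞) := by
    intro x
    have hlen := x.2.2
    rw [tupleLen, Fin.sum_univ_succ] at hlen
    set e0 := G.edist (x.1 ((0 : Fin (m + 1)).castSucc)) (x.1 ((0 : Fin (m + 1)).succ)) with he0
    set S := ∑ i : Fin m, G.edist (x.1 (i.succ.castSucc)) (x.1 (i.succ.succ)) with hS
    have hSle : S ≤ ((m * G.diam : ℕ) : ℕ∞) := by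
      calc S ≤ ∑ _i : Fin m, (G.diam : ℕ∞) := Finset.sum_le_sum fun i _ => edist_le_d _ _
        _ = ((m * G.diam : ℕ) : ℕ∞) := by
            rw [Finset.sum_const, Finset.card_univ, Fintype.card_fin, nsmul_eq_mul,
              Nat.cast_mul]
    have he0le : e0 ≤ (G.diam : ℕ∞) := edist_le_d _ _
    have he0ne : e0 ≠ ⊤ := ne_top_of_le_ne_top (ENat.coe_ne_top _) he0le
    have hSne : S ≠ ⊤ := ne_top_of_le_ne_top (ENat.coe_ne_top _) hSle
    obtain ⟨n, hn⟩ : ∃ n : ℕ, (n : ℕ∞) = e0 := ⟨e0.toNat, ENat.coe_toNat he0ne⟩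
    obtain ⟨s, hs⟩ : ∃ s : ℕ, (s : ℕ∞) = S := ⟨S.toNat, ENat.coe_toNat hSne⟩
    have hnd : n ≤ G.diam := by rw [← hn] at he0le; exact_mod_cast he0le
    have hsd : s ≤ m * G.diam := by rw [← hs] at hSle; exact_mod_cast hSle
    have hsum' : n + s = l := by
      have : ((n + s : ℕ) : ℕ∞) = ((l : ℕ) : ℕ∞) := by
        rw [Nat.cast_add, hn, hs]; exact hlen
      exact_mod_cast this
    have hleq' : l = m * G.diam + G.diam := by rw [hleq, Nat.succ_mul]
    have hnval : n = G.diam := by omega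
    rw [← hn]
    exact_mod_cast hnval
  -- choose a midpoint after the first vertex of each generator
  have hmid : ∀ x : MagTuple G (m + 1) l, ∃ y : V,
      G.edist (x.1 ((0 : Fin (m + 1)).castSucc)) y = 1 ∧
        G.edist y (x.1 ((0 : Fin (m + 1)).succ)) = ((G.diam - 1 : ℕ) : ℕ∞) :=
    fun x => exists_mid G _ _ G.diam (by omega) (gap0 x)
  choose y hy1 hy2 using hmid
  -- the extended tuple
  set z : MagTuple G (m + 1) l → (Fin (m + 3) → V) := fun x i =>
    if (i : ℕ) = 0 then x.1 ((0 : Fin (m + 1)).castSucc)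
    else if (i : ℕ) = 1 then y x
    else x.1 ⟨(i : ℕ) - 1, by omega⟩ with hzdef
  have zval0 : ∀ (x : MagTuple G (m + 1) l) (i : Fin (m + 3)), (i : ℕ) = 0 →
      z x i = x.1 ((0 : Fin (m + 1)).castSucc) := by
    intro x i hi; rw [hzdef]; simp only; rw [if_pos hi]
  have zval1 : ∀ (x : MagTuple G (m + 1) l) (i : Fin (m + 3)), (i : ℕ) = 1 →
      z x i = y x := by
    intro x i hi; rw [hzdef]; simp only; rw [if_neg (by omega), if_pos hi]
  have zval2 : ∀ (x : MagTuple G (m + 1) l) (i : Fin (m + 3)) (hi : 2 ≤ (i : ℕ)),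
      z x i = x.1 ⟨(i : ℕ) - 1, by omega⟩ := by
    intro x i hi; rw [hzdef]; simp only; rw [if_neg (by omega), if_neg (by omega)]
  -- the extended tuple is a generator
  have hx01 : ∀ x : MagTuple G (m + 1) l,
      x.1 ((0 : Fin (m + 1)).succ) = x.1 ⟨1, by omega⟩ := by
    intro x; congr 1
  have hz : ∀ x : MagTuple G (m + 1) l, IsMagTuple G l (z x) := by
    intro x
    have hxgap : ∀ j : ℕ, (hj : j + 1 < m + 2) →
        x.1 ⟨j, by omega⟩ ≠ x.1 ⟨j + 1, hj⟩ := by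
      intro j hj
      have h := x.2.1 ⟨j, by omega⟩
      have e1 : ((⟨j, by omega⟩ : Fin (m + 1)).castSucc) = (⟨j, by omega⟩ : Fin (m + 2)) := by
        ext; simp
      have e2 : ((⟨j, by omega⟩ : Fin (m + 1)).succ) = (⟨j + 1, hj⟩ : Fin (m + 2)) := by
        ext; simp
      rwa [e1, e2] at h
    constructor
    · intro i
      rcases Nat.lt_or_ge (i : ℕ) 1 with hi | hi
      · have h0 : ((i.castSucc : Fin (m + 3)) : ℕ) = 0 := by simp only [Fin.coe_castSucc]; omega
        have h1 : ((i.succ : Fin (m + 3)) : ℕ) = 1 := by simp only [Fin.val_succ]; omega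
        rw [zval0 x _ h0, zval1 x _ h1]
        intro he
        have := hy1 x
        rw [← he, SimpleGraph.edist_self] at this
        exact absurd this.symm one_ne_zero
      rcases Nat.lt_or_ge (i : ℕ) 2 with hi2 | hi2
      · have h0 : ((i.castSucc : Fin (m + 3)) : ℕ) = 1 := by simp; omega
        have h1 : 2 ≤ ((i.succ : Fin (m + 3)) : ℕ) := by simp; omega
        rw [zval1 x _ h0, zval2 x _ h1]
        intro he
        have := hy2 x
        rw [he] at this
        have hidx : (⟨((i.succ : Fin (m + 3)) : ℕ) - 1, by omega⟩ : Fin (m + 2)) =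
            ((0 : Fin (m + 1)).succ) := by
          ext; simp; omega
        rw [hidx, SimpleGraph.edist_self] at this
        have : (0 : ℕ) = G.diam - 1 := by exact_mod_cast this
        omega
      · have h0 : 2 ≤ ((i.castSucc : Fin (m + 3)) : ℕ) := by simp; omega
        have h1 : 2 ≤ ((i.succ : Fin (m + 3)) : ℕ) := by simp; omega
        rw [zval2 x _ h0, zval2 x _ h1]
        have hcv : ((i.castSucc : Fin (m + 3)) : ℕ) = (i : ℕ) := by simp
        have hsv : ((i.succ : Fin (m + 3)) : ℕ) = (i : ℕ) + 1 := by simp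
        have e2 : (⟨((i.succ : Fin (m + 3)) : ℕ) - 1, by omega⟩ : Fin (m + 2)) =
            (⟨(((i.castSucc : Fin (m + 3)) : ℕ) - 1) + 1, by omega⟩ : Fin (m + 2)) := by
          ext; simp; omega
        rw [e2]
        exact hxgap _ _
    · rw [tupleLen, Fin.sum_univ_succ, Fin.sum_univ_succ]
      have hterm0 : G.edist (z x (((0 : Fin (m + 2))).castSucc)) (z x ((0 : Fin (m + 2)).succ))
          = 1 := by
        rw [zval0 x _ (by simp), zval1 x _ (by simp)]
        exact hy1 x
      have hterm1 : G.edist (z x (((0 : Fin (m + 1)).succ).castSucc))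
          (z x (((0 : Fin (m + 1)).succ).succ)) = ((G.diam - 1 : ℕ) : ℕ∞) := by
        rw [zval1 x _ (by simp), zval2 x _ (by simp only [Fin.val_succ, Fin.val_zero]; omega)]
        have hidx : (⟨(((((0 : Fin (m + 1)).succ).succ : Fin (m + 3))) : ℕ) - 1, by omega⟩ :
            Fin (m + 2)) = ((0 : Fin (m + 1)).succ) := by
          ext; simp
        rw [hidx]
        exact hy2 x
      have htail : ∀ j : Fin m,
          G.edist (z x (((j.succ.succ : Fin (m + 2))).castSucc)) (z x ((j.succ.succ : Fin (m + 2)).succ))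
            = G.edist (x.1 ((j.succ).castSucc)) (x.1 ((j.succ).succ)) := by
        intro j
        rw [zval2 x _ (by simp), zval2 x _ (by simp)]
        refine congrArg₂ G.edist (congrArg x.1 (Fin.ext ?_)) (congrArg x.1 (Fin.ext ?_))
        · show (((j.succ.succ : Fin (m + 2)).castSucc : Fin (m + 3)) : ℕ) - 1
              = ((j.succ.castSucc : Fin (m + 2)) : ℕ)
          simp
        · show (((j.succ.succ : Fin (m + 2)).succ : Fin (m + 3)) : ℕ) - 1
              = ((j.succ.succ : Fin (m + 2)) : ℕ)
          simp
      rw [hterm0, hterm1]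
      rw [Finset.sum_congr rfl (fun j _ => htail j)]
      have hxlen := x.2.2
      rw [tupleLen, Fin.sum_univ_succ, gap0 x] at hxlen
      rw [← hxlen, ← add_assoc]
      congr 1
      rw [← Nat.cast_one (R := ℕ∞), ← Nat.cast_add]
      congr 1
      omega
  -- the differential sends the extended generator to minus the original one
  have hdiff : ∀ x : MagTuple G (m + 1) l,
      magDiff G (m + 1) l (FreeAbelianGroup.of (⟨z x, hz x⟩ : MagTuple G (m + 2) l))
        = - FreeAbelianGroup.of x := by
    intro x
    refine (magDiff_of G (m + 1) l ⟨z x, hz x⟩).trans ?_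
    have hcoe : ((⟨z x, hz x⟩ : MagTuple G (m + 2) l) : Fin (m + 3) → V) = z x := rfl
    simp only [hcoe]
    rw [Fin.sum_univ_succ]
    have hcomp0 : z x ∘ Fin.succAbove ((0 : Fin (m + 1)).succ.castSucc) = x.1 := by
      funext j
      have hrv : (((0 : Fin (m + 1)).succ.castSucc : Fin (m + 3)) : ℕ) = 1 := by simp
      have hav : ((Fin.succAbove ((0 : Fin (m + 1)).succ.castSucc) j : Fin (m + 3)) : ℕ)
          = if (j : ℕ) < 1 then (j : ℕ) else (j : ℕ) + 1 := by
        rw [succAbove_val, hrv]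
      rw [Function.comp_apply]
      rcases Nat.lt_or_ge (j : ℕ) 1 with hj | hj
      · rw [zval0 x _ (by rw [hav, if_pos hj]; omega)]
        exact congrArg x.1 (Fin.ext (by simp; omega))
      · rw [zval2 x _ (by rw [hav, if_neg (by omega)]; omega)]
        refine congrArg x.1 (Fin.ext ?_)
        show ((Fin.succAbove ((0 : Fin (m + 1)).succ.castSucc) j : Fin (m + 3)) : ℕ) - 1 = (j : ℕ)
        rw [hav, if_neg (by omega)]
        omega
    have hterm : ∀ j : Fin m,
        mcGen G l (z x ∘ Fin.succAbove ((j.succ : Fin (m + 1)).succ.castSucc)) = 0 := by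
      intro j
      set w := z x ∘ Fin.succAbove ((j.succ : Fin (m + 1)).succ.castSucc) with hw
      have hrv : (((j.succ : Fin (m + 1)).succ.castSucc : Fin (m + 3)) : ℕ) = (j : ℕ) + 2 := by
        simp
      have hav : ∀ i : Fin (m + 2),
          ((Fin.succAbove ((j.succ : Fin (m + 1)).succ.castSucc) i : Fin (m + 3)) : ℕ)
            = if (i : ℕ) < (j : ℕ) + 2 then (i : ℕ) else (i : ℕ) + 1 := by
        intro i
        rw [succAbove_val, hrv]
      have hc0 : (((0 : Fin (m + 1)).castSucc : Fin (m + 2)) : ℕ) = 0 := by simp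
      have hs0 : (((0 : Fin (m + 1)).succ : Fin (m + 2)) : ℕ) = 1 := by simp
      erw [mcGen, dif_neg]
      rintro ⟨-, hlen⟩
      have hfirst : G.edist (w ((0 : Fin (m + 1)).castSucc)) (w ((0 : Fin (m + 1)).succ)) = 1 := by
        rw [hw, Function.comp_apply, Function.comp_apply,
          zval0 x _ (by rw [hav, hc0, if_pos (by omega)]),
          zval1 x _ (by rw [hav, hs0, if_pos (by omega)])]
        exact hy1 x
      have hlt : tupleLen G w < (l : ℕ∞) := by
        rw [tupleLen, Fin.sum_univ_succ, hfirst]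
        have htail : (∑ i : Fin m, G.edist (w ((i.succ : Fin (m + 1)).castSucc))
            (w ((i.succ : Fin (m + 1)).succ))) ≤ ((m * G.diam : ℕ) : ℕ∞) := by
          calc _ ≤ ∑ _i : Fin m, (G.diam : ℕ∞) := Finset.sum_le_sum fun i _ => edist_le_d _ _
            _ = ((m * G.diam : ℕ) : ℕ∞) := by
                rw [Finset.sum_const, Finset.card_univ, Fintype.card_fin, nsmul_eq_mul,
                  Nat.cast_mul]
        calc (1 : ℕ∞) + _ ≤ (1 : ℕ∞) + ((m * G.diam : ℕ) : ℕ∞) := by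
              exact add_le_add_right htail 1
          _ = ((1 + m * G.diam : ℕ) : ℕ∞) := by rw [Nat.cast_add, Nat.cast_one]
          _ < ((l : ℕ) : ℕ∞) := by
              rw [Nat.cast_lt, hleq, Nat.succ_mul]
              omega
      exact absurd hlen hlt.ne
    rw [Finset.sum_eq_zero (fun j _ => by rw [hterm j, smul_zero]), add_zero]
    rw [hcomp0]
    erw [mcGen, dif_pos x.2]
    simp
    exact neg_one_zsmul _
  -- the differential is surjective, hence the boundaries are everything
  have hsurj : Function.Surjective (magDiff G (m + 1) l) := by
    intro c
    refine FreeAbelianGroup.induction_on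
      (motive := fun w => ∃ a, magDiff G (m + 1) l a = w) c ⟨0, map_zero _⟩
      (fun x => ?_) (fun x => ?_) ?_
    · exact ⟨- FreeAbelianGroup.of (⟨z x, hz x⟩ : MagTuple G (m + 2) l),
        by erw [map_neg, hdiff x, neg_neg]⟩
    · rintro ⟨a, ha⟩
      exact ⟨-a, by rw [map_neg, ha]; rfl⟩
    · rintro a b ⟨u, hu⟩ ⟨v, hv⟩
      exact ⟨u + v, by rw [map_add, hu, hv]; rfl⟩
  have hrange : (magDiff G (m + 1) l).range = ⊤ := AddMonoidHom.range_eq_top.mpr hsurj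
  have hb : magBoundaries G (m + 1) l = ⊤ := by
    rw [magBoundaries, hrange]
    exact AddSubgroup.addSubgroupOf_eq_top.mpr le_top
  unfold MH
  rw [hb]
  exact QuotientAddGroup.subsingleton_quotient_top

end Aux

/-- If `MH_{k,l}(G) ≠ 0` then `k ≤ l`; if moreover `G` is connected
with (finite) diameter `d`, then `l/d ≤ k`, and if additionally `d > 1` and `l > 0`
then `l/d < k`. -/
theorem MH_support_bounds {V : Type*} [Fintype V] (G : SimpleGraph V) (k l : ℕ)
    (h : Nontrivial (MH G k l)) :
    k ≤ l ∧
      (G.Connected →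
        ((l : ℝ) / (G.diam : ℝ) ≤ (k : ℝ) ∧
          (1 < G.diam → 0 < l → (l : ℝ) / (G.diam : ℝ) < (k : ℝ)))) := by
  -- a generating tuple exists
  have hne : Nonempty (MagTuple G k l) := by
    by_contra hemp
    rw [not_nonempty_iff] at hemp
    haveI := subsingleton_MC_of_isEmpty G k l hemp
    haveI hsc : Subsingleton (magCycles G l k) :=
      ⟨fun a b => Subtype.ext (Subsingleton.elim _ _)⟩
    haveI : Subsingleton (MH G k l) := by
      unfold MH
      constructor
      intro a b
      obtain ⟨a', rfl⟩ := QuotientAddGroup.mk_surjective a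
      obtain ⟨b', rfl⟩ := QuotientAddGroup.mk_surjective b
      rw [Subsingleton.elim a' b']
    exact absurd this (not_subsingleton _)
  obtain ⟨x⟩ := hne
  -- k ≤ l
  have h1 : (k : ℕ∞) ≤ (l : ℕ∞) := by
    have hlen := x.2.2
    rw [tupleLen] at hlen
    calc (k : ℕ∞) = ∑ _i : Fin k, 1 := by
          rw [Finset.sum_const, Finset.card_univ, Fintype.card_fin, nsmul_eq_mul, mul_one]
      _ ≤ ∑ i : Fin k, G.edist (x.1 i.castSucc) (x.1 i.succ) :=
          Finset.sum_le_sum fun i _ => Order.one_le_iff_pos.mpr (G.edist_pos_of_ne (x.2.1 i))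
      _ = (l : ℕ∞) := hlen
  have hkl : k ≤ l := by exact_mod_cast h1
  refine ⟨hkl, fun hconn => ?_⟩
  -- the extended diameter is finite
  have hne_top : G.ediam ≠ ⊤ := by
    haveI : Nonempty V := hconn.nonempty
    obtain ⟨u, v, huv⟩ := G.exists_edist_eq_ediam_of_finite
    rw [← huv]
    exact (G.edist_ne_top_iff_reachable).mpr (hconn.preconnected u v)
  have hcast : (G.diam : ℕ∞) = G.ediam := ENat.coe_toNat hne_top
  -- l ≤ k * diam
  have h2 : (l : ℕ∞) ≤ ((k * G.diam : ℕ) : ℕ∞) := by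
    rw [← x.2.2, tupleLen]
    calc ∑ i : Fin k, G.edist (x.1 i.castSucc) (x.1 i.succ)
        ≤ ∑ _i : Fin k, (G.diam : ℕ∞) :=
          Finset.sum_le_sum fun i _ => hcast ▸ SimpleGraph.edist_le_ediam
      _ = ((k * G.diam : ℕ) : ℕ∞) := by
          rw [Finset.sum_const, Finset.card_univ, Fintype.card_fin, nsmul_eq_mul, Nat.cast_mul]
  have hld : l ≤ k * G.diam := by exact_mod_cast h2
  constructor
  · rcases Nat.eq_zero_or_pos G.diam with h0 | hpos
    · rw [h0]
      simp
    · rw [div_le_iff₀ (by exact_mod_cast hpos)]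
      exact_mod_cast hld
  · intro hd hl0
    have hlt : l < k * G.diam := by
      rcases lt_or_eq_of_le hld with hlt | heq
      · exact hlt
      · exfalso
        obtain ⟨m, rfl⟩ : ∃ m, k = m + 1 := by
          cases k with
          | zero =>
            exfalso
            have hlen := x.2.2
            rw [tupleLen] at hlen
            simp only [Finset.univ_eq_empty, Finset.sum_empty] at hlen
            have : l = 0 := by exact_mod_cast hlen.symm
            omega
          | succ m => exact ⟨m, rfl⟩
        exact absurd (MH_subsingleton_of_mul G m l hd heq) (not_subsingleton _)
    rw [div_lt_iff₀ (by exact_mod_cast (by omega : 0 < G.diam))]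
    exact_mod_cast hlt

end MagnitudeHomology
end
end

section
/- Let K_n denote the complete graph on n vertices. For every l ≥ 0, MH_{l,l}(K_n) is isomorphic to the free abelian group on the set of (l+1)-tuples (x_0,…,x_l) of vertices of K_n with x_0 ≠ x_1, …, x_{l-1} ≠ x_l (so it has rank n(n−1)^l), and MH_{k,l}(K_n) = 0 whenever k ≠ l. -/
noncomputable section

namespace MagnitudeHomology

open Classical

variable {V : Type*} {W : Type*}

section Aux

variable {n : ℕ}

lemma top_edist (x y : Fin n) :
    (⊤ : SimpleGraph (Fin n)).edist x y = if x = y then 0 else 1 := by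
  split_ifs with h
  · subst h; exact SimpleGraph.edist_self
  · exact SimpleGraph.edist_eq_one_iff_adj.mpr (by simpa using h)

lemma isMagTuple_top_iff {k l : ℕ} (x : Fin (k + 1) → Fin n) :
    IsMagTuple (⊤ : SimpleGraph (Fin n)) l x ↔
      (∀ i : Fin k, x i.castSucc ≠ x i.succ) ∧ k = l := by
  constructor
  · rintro ⟨h1, h2⟩
    refine ⟨h1, ?_⟩
    have hl : tupleLen (⊤ : SimpleGraph (Fin n)) x = (k : ℕ∞) := by
      unfold tupleLen
      rw [Finset.sum_congr rfl (fun i _ => by rw [top_edist, if_neg (h1 i)])]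
      simp
    rw [hl] at h2
    exact_mod_cast h2
  · rintro ⟨h1, rfl⟩
    refine ⟨h1, ?_⟩
    unfold tupleLen
    rw [Finset.sum_congr rfl (fun i _ => by rw [top_edist, if_neg (h1 i)])]
    simp

lemma isEmpty_magTuple_top {k l : ℕ} (h : k ≠ l) :
    IsEmpty (MagTuple (⊤ : SimpleGraph (Fin n)) k l) := by
  refine ⟨fun x => ?_⟩
  obtain ⟨f, hf⟩ := x
  exact h ((isMagTuple_top_iff f).1 hf).2

lemma subsingleton_freeAbelianGroup (X : Type*) [IsEmpty X] :
    Subsingleton (FreeAbelianGroup X) :=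
  ((FreeAbelianGroup.equivFinsupp X).toEquiv).subsingleton

lemma subsingleton_MC_top {k l : ℕ} (h : k ≠ l) :
    Subsingleton (MC (⊤ : SimpleGraph (Fin n)) k l) :=
  have := isEmpty_magTuple_top (n := n) h
  subsingleton_freeAbelianGroup _

/-- Forgetting the (automatic) length condition on magnitude tuples
for the complete graph. -/
def magTupleEquivTop (l : ℕ) :
    MagTuple (⊤ : SimpleGraph (Fin n)) l l ≃
      {x : Fin (l + 1) → Fin n // ∀ i : Fin l, x i.castSucc ≠ x i.succ} :=
  Equiv.subtypeEquivRight fun x => by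
    rw [isMagTuple_top_iff]
    exact ⟨fun h => h.1, fun h => ⟨h, rfl⟩⟩

lemma magCycles_top_eq_top (l : ℕ) :
    magCycles (⊤ : SimpleGraph (Fin n)) l l = ⊤ := by
  cases l with
  | zero => rfl
  | succ k =>
    rw [AddSubgroup.eq_top_iff']
    intro x
    show x ∈ (magDiff (⊤ : SimpleGraph (Fin n)) k (k + 1)).ker
    rw [AddMonoidHom.mem_ker]
    have := subsingleton_MC_top (n := n) (k := k) (l := k + 1) (by omega)
    exact Subsingleton.elim _ _

lemma magBoundaries_top_eq_bot (l : ℕ) :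
    magBoundaries (⊤ : SimpleGraph (Fin n)) l l = ⊥ := by
  rw [eq_bot_iff]
  rintro ⟨x, hx⟩ hmem
  obtain ⟨y, hy⟩ := hmem
  have := subsingleton_MC_top (n := n) (k := l + 1) (l := l) (by omega)
  have hy0 : y = 0 := Subsingleton.elim _ _
  rw [hy0, map_zero] at hy
  simp only [AddSubgroup.mem_bot]
  exact Subtype.ext hy.symm

/-- `MH_{l,l}(K_n)` is the free abelian group on tuples with consecutive
entries distinct. -/
def mhTopEquiv (l : ℕ) :
    MH (⊤ : SimpleGraph (Fin n)) l l ≃+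
      FreeAbelianGroup {x : Fin (l + 1) → Fin n // ∀ i : Fin l, x i.castSucc ≠ x i.succ} :=
  ((QuotientAddGroup.quotientAddEquivOfEq (magBoundaries_top_eq_bot l)).trans
    (QuotientAddGroup.quotientBot)).trans <|
    ((AddEquiv.addSubgroupCongr (magCycles_top_eq_top (n := n) l)).trans
      AddSubgroup.topEquiv).trans <|
    FreeAbelianGroup.equivOfEquiv (magTupleEquivTop l)

lemma card_consecutive_ne (n l : ℕ) :
    Fintype.card {x : Fin (l + 1) → Fin n // ∀ i : Fin l, x i.castSucc ≠ x i.succ} =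
      n * (n - 1) ^ l := by
  induction l with
  | zero =>
    rw [Fintype.card_congr ((Equiv.subtypeUnivEquiv (fun x => fun i => i.elim0)).trans
      (Equiv.funUnique (Fin 1) (Fin n)))]
    simp
  | succ l ih =>
    have e : {x : Fin (l + 2) → Fin n // ∀ i : Fin (l + 1), x i.castSucc ≠ x i.succ} ≃
        Σ t : {x : Fin (l + 1) → Fin n // ∀ i : Fin l, x i.castSucc ≠ x i.succ},
          {y : Fin n // y ≠ t.1 (Fin.last l)} :=
      { toFun := fun x =>
          ⟨⟨Fin.init x.1, fun i => by
            have h := x.2 i.castSucc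
            rwa [Fin.succ_castSucc] at h⟩,
           ⟨x.1 (Fin.last (l + 1)), by
            have h := x.2 (Fin.last l)
            exact fun he => h (by rw [Fin.succ_last]; exact he.symm ▸ rfl)⟩⟩
        invFun := fun t =>
          ⟨Fin.snoc t.1.1 t.2.1, fun i => by
            induction i using Fin.lastCases with
            | last =>
              rw [Fin.succ_last, Fin.snoc_castSucc, Fin.snoc_last]
              exact fun he => t.2.2 he.symm
            | cast j =>
              rw [Fin.succ_castSucc, Fin.snoc_castSucc, Fin.snoc_castSucc]
              exact t.1.2 j⟩
        left_inv := fun x => Subtype.ext (by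
          simp [Fin.snoc_init_self])
        right_inv := fun t => by
          obtain ⟨⟨f, hf⟩, y, hy⟩ := t
          have h1 : Fin.init (Fin.snoc f y : Fin (l + 2) → Fin n) = f := by simp
          refine Sigma.ext (Subtype.ext (by simp [h1])) ?_
          rw [Subtype.heq_iff_coe_eq (fun z => by simp [h1])]
          simp }
    rw [Fintype.card_congr e, Fintype.card_sigma]
    have hfib : ∀ t : {x : Fin (l + 1) → Fin n // ∀ i : Fin l, x i.castSucc ≠ x i.succ},
        Fintype.card {y : Fin n // y ≠ t.1 (Fin.last l)} = n - 1 := fun t => by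
      simp [ne_eq, Fintype.card_subtype_compl, Fintype.card_subtype_eq]
    rw [Finset.sum_congr rfl (fun t _ => hfib t), Finset.sum_const, Finset.card_univ, ih,
      smul_eq_mul, pow_succ]
    ring

end Aux

/-- For the complete graph `K_n` (every pair of distinct vertices
adjacent): `MH_{l,l}(K_n)` is isomorphic to the free abelian group on `(l+1)`-tuples
of vertices with consecutive entries distinct (hence has rank `n·(n-1)^l`), and
`MH_{k,l}(K_n) = 0` for `k ≠ l`. -/
theorem MH_completeGraph (n : ℕ) :
    (∀ l : ℕ,
        Nonempty (MH (⊤ : SimpleGraph (Fin n)) l l ≃+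
          FreeAbelianGroup {x : Fin (l + 1) → Fin n // ∀ i : Fin l, x i.castSucc ≠ x i.succ}) ∧
        Module.finrank ℤ (MH (⊤ : SimpleGraph (Fin n)) l l) = n * (n - 1) ^ l) ∧
      ∀ k l : ℕ, k ≠ l → Subsingleton (MH (⊤ : SimpleGraph (Fin n)) k l) := by
  constructor
  · intro l
    refine ⟨⟨mhTopEquiv l⟩, ?_⟩
    have e : MH (⊤ : SimpleGraph (Fin n)) l l ≃+
        ({x : Fin (l + 1) → Fin n // ∀ i : Fin l, x i.castSucc ≠ x i.succ} →₀ ℤ) :=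
      (mhTopEquiv l).trans (FreeAbelianGroup.equivFinsupp _)
    rw [LinearEquiv.finrank_eq e.toIntLinearEquiv, Module.finrank_finsupp_self,
      card_consecutive_ne]
  · intro k l h
    have h1 := subsingleton_MC_top (n := n) h
    have h2 : Subsingleton (magCycles (⊤ : SimpleGraph (Fin n)) l k) :=
      ⟨fun a b => Subtype.ext (Subsingleton.elim _ _)⟩
    exact (QuotientAddGroup.mk'_surjective
      (magBoundaries (⊤ : SimpleGraph (Fin n)) k l)).subsingleton

end MagnitudeHomology
end
end

section
/- For any graphs G and H and every l ≥ 0, the l-th coefficient of the magnitude of the disjoint union is additive: c_l(G ⊔ H) = c_l(G) + c_l(H); equivalently #(G ⊔ H) = #G + #H as formal power series. -/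
noncomputable section

namespace MagnitudeHomology

open Classical

variable {V : Type*} {W : Type*}

/-- The `l`-th coefficient `c_l(G)` of the magnitude power series `#G`. -/
def magCoeff (G : SimpleGraph V) (l : ℕ) : ℤ :=
  ∑ k ∈ Finset.range (l + 1), (-1 : ℤ) ^ k * (Nat.card (MagTuple G k l) : ℤ)

section DisjointUnion

variable {α β : Type*} {G : SimpleGraph α} {H : SimpleGraph β}

private lemma sum_walk_inl : ∀ {u x : α ⊕ β} (p : (G.sum H).Walk u x) (a : α), u = Sum.inl a →
    ∃ (b : α) (q : G.Walk a b), x = Sum.inl b ∧ q.length = p.length := by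
  intro u x p
  induction p with
  | nil =>
    rintro a rfl
    exact ⟨a, SimpleGraph.Walk.nil, rfl, rfl⟩
  | @cons u v x h p ih =>
    rintro a rfl
    match v, h with
    | Sum.inl a', h =>
      have hadj : G.Adj a a' := by simpa [SimpleGraph.sum] using h
      obtain ⟨b, q, hx, hl⟩ := ih a' rfl
      exact ⟨b, q.cons hadj, hx, by simp [hl]⟩
    | Sum.inr b', h => simp [SimpleGraph.sum] at h

private lemma sum_walk_inr : ∀ {u x : α ⊕ β} (p : (G.sum H).Walk u x) (b : β), u = Sum.inr b →
    ∃ (c : β) (q : H.Walk b c), x = Sum.inr c ∧ q.length = p.length := by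
  intro u x p
  induction p with
  | nil =>
    rintro b rfl
    exact ⟨b, SimpleGraph.Walk.nil, rfl, rfl⟩
  | @cons u v x h p ih =>
    rintro b rfl
    match v, h with
    | Sum.inr b', h =>
      have hadj : H.Adj b b' := by simpa [SimpleGraph.sum] using h
      obtain ⟨c, q, hx, hl⟩ := ih b' rfl
      exact ⟨c, q.cons hadj, hx, by simp [hl]⟩
    | Sum.inl a', h => simp [SimpleGraph.sum] at h

private lemma edist_sum_inl (a b : α) :
    (G.sum H).edist (Sum.inl a) (Sum.inl b) = G.edist a b := by
  apply le_antisymm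
  · rw [SimpleGraph.edist_eq_sInf (G := G)]
    apply le_sInf
    rintro _ ⟨w, rfl⟩
    have := SimpleGraph.edist_le (w.map (SimpleGraph.Embedding.sumInl (G := G) (H := H)).toHom)
    simpa using this
  · rw [SimpleGraph.edist_eq_sInf (G := G.sum H)]
    apply le_sInf
    rintro _ ⟨w, rfl⟩
    obtain ⟨b', q, hb, hl⟩ := sum_walk_inl w a rfl
    obtain rfl : b' = b := by simpa using hb.symm
    simpa [← hl] using SimpleGraph.edist_le q

private lemma edist_sum_inr (a b : β) :
    (G.sum H).edist (Sum.inr a) (Sum.inr b) = H.edist a b := by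
  apply le_antisymm
  · rw [SimpleGraph.edist_eq_sInf (G := H)]
    apply le_sInf
    rintro _ ⟨w, rfl⟩
    have := SimpleGraph.edist_le (w.map (SimpleGraph.Embedding.sumInr (G := G) (H := H)).toHom)
    simpa using this
  · rw [SimpleGraph.edist_eq_sInf (G := G.sum H)]
    apply le_sInf
    rintro _ ⟨w, rfl⟩
    obtain ⟨b', q, hb, hl⟩ := sum_walk_inr w a rfl
    obtain rfl : b' = b := by simpa using hb.symm
    simpa [← hl] using SimpleGraph.edist_le q

private lemma edist_sum_inl_inr (a : α) (b : β) :
    (G.sum H).edist (Sum.inl a) (Sum.inr b) = ⊤ := by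
  by_contra h
  obtain ⟨w, -⟩ := SimpleGraph.exists_walk_of_edist_ne_top h
  obtain ⟨b', q, hb, -⟩ := sum_walk_inl w a rfl
  simp at hb

private lemma edist_sum_inr_inl (a : β) (b : α) :
    (G.sum H).edist (Sum.inr a) (Sum.inl b) = ⊤ := by
  rw [SimpleGraph.edist_comm]
  exact edist_sum_inl_inr b a

private lemma isMagTuple_inl {k l : ℕ} (y : Fin (k + 1) → α) :
    IsMagTuple (G.sum H) l (Sum.inl ∘ y) ↔ IsMagTuple G l y := by
  unfold IsMagTuple tupleLen
  simp [Function.comp, edist_sum_inl]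

private lemma isMagTuple_inr {k l : ℕ} (y : Fin (k + 1) → β) :
    IsMagTuple (G.sum H) l (Sum.inr ∘ y) ↔ IsMagTuple H l y := by
  unfold IsMagTuple tupleLen
  simp [Function.comp, edist_sum_inr]

private lemma magTuple_sum_cases {k l : ℕ} (x : Fin (k + 1) → α ⊕ β)
    (hx : IsMagTuple (G.sum H) l x) :
    (∃ y, x = Sum.inl ∘ y) ∨ (∃ z, x = Sum.inr ∘ z) := by
  have hfin : ∀ i : Fin k, (G.sum H).edist (x i.castSucc) (x i.succ) ≠ ⊤ := by
    intro i hi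
    have hle : (G.sum H).edist (x i.castSucc) (x i.succ) ≤ tupleLen (G.sum H) x :=
      Finset.single_le_sum (f := fun j : Fin k => (G.sum H).edist (x j.castSucc) (x j.succ))
        (fun _ _ => zero_le) (Finset.mem_univ i)
    rw [hx.2, hi, top_le_iff] at hle
    exact (ENat.coe_ne_top l) hle
  have hconsec : ∀ i : Fin k, (x i.castSucc).isLeft = (x i.succ).isLeft := by
    intro i
    rcases hu : x i.castSucc with a | a <;> rcases hv : x i.succ with b | b <;> simp
    · have := hfin i; rw [hu, hv, edist_sum_inl_inr] at this; exact this rfl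
    · have := hfin i; rw [hu, hv, edist_sum_inr_inl] at this; exact this rfl
  have hall : ∀ j : Fin (k + 1), (x j).isLeft = (x 0).isLeft := by
    intro j
    induction j using Fin.induction with
    | zero => rfl
    | succ i ih => rw [← hconsec i]; exact ih
  rcases h0 : x 0 with a | a
  · left
    have hli : ∀ j, ∃ a, x j = Sum.inl a := by
      intro j
      have := hall j
      rw [h0] at this
      simpa [Sum.isLeft_iff] using this
    exact ⟨fun j => (hli j).choose, funext fun j => (hli j).choose_spec⟩
  · right
    have hri : ∀ j, ∃ a, x j = Sum.inr a := by
      intro j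
      have := hall j
      rw [h0] at this
      simp only [Sum.isLeft_inr] at this
      simpa [Sum.isRight_iff] using (Sum.not_isLeft.mp (by simp [this]))
    exact ⟨fun j => (hri j).choose, funext fun j => (hri j).choose_spec⟩

private lemma card_magTuple_sum {V W : Type*} [Fintype V] [Fintype W]
    (G : SimpleGraph V) (H : SimpleGraph W) (k l : ℕ) :
    Nat.card (MagTuple (G.sum H) k l) =
      Nat.card (MagTuple G k l) + Nat.card (MagTuple H k l) := by
  have h1 : Finite (MagTuple G k l) := Subtype.finite
  have h2 : Finite (MagTuple H k l) := Subtype.finite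
  set f : MagTuple G k l ⊕ MagTuple H k l → MagTuple (G.sum H) k l :=
    Sum.elim (fun y => ⟨Sum.inl ∘ y.1, (isMagTuple_inl y.1).2 y.2⟩)
      (fun z => ⟨Sum.inr ∘ z.1, (isMagTuple_inr z.1).2 z.2⟩) with hf
  have hbij : Function.Bijective f := by
    constructor
    · rintro (y1 | y1) (y2 | y2) h <;>
        have h' := congrArg Subtype.val h <;>
        simp only [hf, Sum.elim_inl, Sum.elim_inr] at h'
      · exact congrArg Sum.inl (Subtype.ext (funext fun j => by
          have := congrFun h' j; simp [Sum.elim] at this; simpa using this))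
      · have := congrFun h' 0; simp [Sum.elim, Function.comp] at this
      · have := congrFun h' 0; simp [Sum.elim, Function.comp] at this
      · exact congrArg Sum.inr (Subtype.ext (funext fun j => by
          have := congrFun h' j; simp [Sum.elim] at this; simpa using this))
    · rintro ⟨x, hx⟩
      rcases magTuple_sum_cases x hx with ⟨y, rfl⟩ | ⟨z, rfl⟩
      · exact ⟨Sum.inl ⟨y, (isMagTuple_inl y).1 hx⟩, rfl⟩
      · exact ⟨Sum.inr ⟨z, (isMagTuple_inr z).1 hx⟩, rfl⟩
  rw [← Nat.card_congr (Equiv.ofBijective f hbij), Nat.card_sum]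

end DisjointUnion

/-- **Statement 8.** The magnitude coefficients are additive with respect to disjoint
union: `c_l(G ⊔ H) = c_l(G) + c_l(H)` for all `l`; equivalently
`#(G ⊔ H) = #G + #H` as formal power series. -/
theorem magCoeff_disjoint_union {V W : Type*} [Fintype V] [Fintype W]
    (G : SimpleGraph V) (H : SimpleGraph W) (l : ℕ) :
    magCoeff (G.sum H) l = magCoeff G l + magCoeff H l := by
  unfold magCoeff
  rw [← Finset.sum_add_distrib]
  refine Finset.sum_congr rfl fun k _ => ?_
  rw [card_magTuple_sum]
  push_cast
  ring

end MagnitudeHomology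
end
end
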